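/- For every positive integer a, ∫₀¹ ((ax))((x))⁹ dx = (1280 - 2112a² + 1056a⁴ - 264a⁶ + 55a⁸)/(168960a⁹). -/

import Mathlib

set_option maxHeartbeats 1000000


open Real

/-- The sawtooth (first Bernoulli) function `((x))`. -/
noncomputable def saw (x : ℝ) : ℝ := if Int.fract x = 0 then 0 else Int.fract x - 1/2

/-- Closed form for a degree-8 polynomial sum (Faulhaber). -/
lemma sum_poly8 (c0 c1 c2 c3 c4 c5 c6 c7 c8 : ℝ) (n : ℕ) :
    ∑ k ∈ Finset.range n,
      (c0 + c1*(k:ℝ) + c2*(k:ℝ)^2 + c3*(k:ℝ)^3 + c4*(k:ℝ)^4 + c5*(k:ℝ)^5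
        + c6*(k:ℝ)^6 + c7*(k:ℝ)^7 + c8*(k:ℝ)^8)
    = c0*(n:ℝ)
      + c1*((n:ℝ)^2/2 - (n:ℝ)/2)
      + c2*((n:ℝ)^3/3 - (n:ℝ)^2/2 + (n:ℝ)/6)
      + c3*((n:ℝ)^4/4 - (n:ℝ)^3/2 + (n:ℝ)^2/4)
      + c4*((n:ℝ)^5/5 - (n:ℝ)^4/2 + (n:ℝ)^3/3 - (n:ℝ)/30)
      + c5*((n:ℝ)^6/6 - (n:ℝ)^5/2 + 5*(n:ℝ)^4/12 - (n:ℝ)^2/12)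
      + c6*((n:ℝ)^7/7 - (n:ℝ)^6/2 + (n:ℝ)^5/2 - (n:ℝ)^3/6 + (n:ℝ)/42)
      + c7*((n:ℝ)^8/8 - (n:ℝ)^7/2 + 7*(n:ℝ)^6/12 - 7*(n:ℝ)^4/24 + (n:ℝ)^2/12)
      + c8*((n:ℝ)^9/9 - (n:ℝ)^8/2 + 2*(n:ℝ)^7/3 - 7*(n:ℝ)^5/15 + 2*(n:ℝ)^3/9 - (n:ℝ)/30) := by
  induction n with
  | zero => simp
  | succ n ih =>
      rw [Finset.sum_range_succ, ih]
      push_cast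
      ring

/-- FTC computation for the piecewise polynomial. -/
lemma pieceFTC (A d p q : ℝ) :
    ∫ x in p..q, (A*(x-1/2)^10 + d*(x-1/2)^9)
      = (A/11*(q-1/2)^11 + d/10*(q-1/2)^10) - (A/11*(p-1/2)^11 + d/10*(p-1/2)^10) := by
  have h : ∀ x : ℝ, HasDerivAt (fun t : ℝ => A/11*(t-1/2)^11 + d/10*(t-1/2)^10)
      (A*(x-1/2)^10 + d*(x-1/2)^9) x := by
    intro x
    have h1 : HasDerivAt (fun t : ℝ => t - 1/2) 1 x := (hasDerivAt_id x).sub_const _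
    have h2 := ((h1.pow 11).const_mul (A/11)).add ((h1.pow 10).const_mul (d/10))
    refine h2.congr_deriv ?_
    push_cast
    ring
  refine intervalIntegral.integral_eq_sub_of_hasDerivAt (fun x _ => h x) ?_
  apply Continuous.intervalIntegrable
  fun_prop

theorem franel_a1x9 (a : ℕ) (ha : 0 < a) :
    ∫ x in (0:ℝ)..1, saw (a * x) * (saw x)^9 =
      (1280 - 2112 * (a:ℝ)^2 + 1056 * (a:ℝ)^4 - 264 * (a:ℝ)^6 + 55 * (a:ℝ)^8) /
        (168960 * (a:ℝ)^9) := by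
  have haR : (0:ℝ) < (a:ℝ) := by exact_mod_cast ha
  have ha' : (a:ℝ) ≠ 0 := ne_of_gt haR
  set A : ℝ := (a:ℝ) with hA
  set f : ℝ → ℝ := fun x => saw (a * x) * (saw x)^9 with hf
  set P : ℕ → ℝ → ℝ := fun k x => A*(x-1/2)^10 + ((A-1)/2 - (k:ℝ))*(x-1/2)^9 with hP
  set ι : ℕ → ℝ := fun k => (k:ℝ)/A with hι
  -- pointwise equality on the open subintervals
  have hpt : ∀ k : ℕ, k < a → ∀ x : ℝ, (k:ℝ)/A < x → x < ((k:ℝ)+1)/A →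
      f x = P k x := by
    intro k hk x hx1 hx2
    have hk1 : ((k:ℝ)+1) ≤ A := by
      rw [hA]; exact_mod_cast Nat.succ_le_of_lt hk
    have hx0 : 0 < x := lt_of_le_of_lt (by positivity) hx1
    have hxlt1 : x < 1 := lt_of_lt_of_le hx2 (by rw [div_le_one haR]; exact hk1)
    have hfx : Int.fract x = x := Int.fract_eq_self.mpr ⟨le_of_lt hx0, hxlt1⟩
    have hax1 : (k:ℝ) < A * x := by
      rw [div_lt_iff₀ haR] at hx1; linarith [hx1]
    have hax2 : A * x < (k:ℝ) + 1 := by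
      rw [lt_div_iff₀ haR] at hx2; linarith [hx2]
    have hfloor : ⌊A * x⌋ = (k:ℤ) := by
      rw [Int.floor_eq_iff]
      constructor
      · push_cast; linarith
      · push_cast; linarith
    have hfax : Int.fract (A * x) = A * x - (k:ℝ) := by
      rw [Int.fract, hfloor]; push_cast; ring
    have hs1 : saw x = x - 1/2 := by
      rw [saw, hfx, if_neg (ne_of_gt hx0)]
    have hs2 : saw (A * x) = A * x - (k:ℝ) - 1/2 := by
      rw [saw, hfax, if_neg (by intro h; nlinarith)]
    rw [hf, hP]
    simp only [hA] at hs2 ⊢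
    rw [hs1, hs2]
    push_cast
    ring
  have hle : ∀ k : ℕ, (k:ℝ)/A ≤ ((k:ℝ)+1)/A := by
    intro k; gcongr <;> linarith
  -- a.e. equality on each subinterval
  have hae : ∀ k : ℕ, k < a →
      f =ᵐ[MeasureTheory.volume.restrict (Set.uIoc ((k:ℝ)/A) (((k:ℝ)+1)/A))] (P k) := by
    intro k hk
    have hne : ∀ᵐ x : ℝ ∂MeasureTheory.volume, x ≠ ((k:ℝ)+1)/A := by
      refine MeasureTheory.ae_iff.mpr ?_
      simp only [ne_eq, not_not, Set.setOf_eq_eq_singleton]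
      exact MeasureTheory.measure_singleton _
    filter_upwards [MeasureTheory.ae_restrict_mem measurableSet_uIoc,
      MeasureTheory.ae_restrict_of_ae hne] with x hx hxne
    rw [Set.uIoc_of_le (hle k)] at hx
    exact hpt k hk x hx.1 (lt_of_le_of_ne hx.2 hxne)
  have hPcont : ∀ k : ℕ, Continuous (P k) := by
    intro k; rw [hP]; fun_prop
  have hint : ∀ k : ℕ, k < a →
      IntervalIntegrable f MeasureTheory.volume ((k:ℝ)/A) (((k:ℝ)+1)/A) := by
    intro k hk
    exact (((hPcont k).intervalIntegrable _ _)).congr_ae (hae k hk).symm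
  have hcast : ∀ k : ℕ, ι (k+1) = ((k:ℝ)+1)/A := by
    intro k; rw [hι]; push_cast; ring
  have hsplit : ∑ k ∈ Finset.range a, ∫ x in ι k..ι (k+1), f x = ∫ x in (0:ℝ)..1, f x := by
    have h0 : ι 0 = 0 := by simp [hι]
    have h1 : ι a = 1 := by rw [hι]; exact div_self ha'
    rw [← h0, ← h1]
    refine intervalIntegral.sum_integral_adjacent_intervals ?_
    intro k hk
    rw [hcast k]
    exact hint k hk
  -- value of each piece
  have hpiece : ∀ k : ℕ, k < a → ∫ x in ι k..ι (k+1), f x =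
      (9/220 - A/5 + 7*A^2/16 - 9*A^3/16 + 15*A^4/32 - 21*A^5/80 + 63*A^6/640 - 3*A^7/128 + 3*A^8/1024)/A^10
      + (2/5 - 7*A/4 + 27*A^2/8 - 15*A^3/4 + 21*A^4/8 - 189*A^5/160 + 21*A^6/64 - 3*A^7/64)/A^10*(k:ℝ)
      + (7/4 - 27*A/4 + 45*A^2/4 - 21*A^3/2 + 189*A^4/32 - 63*A^5/32 + 21*A^6/64)/A^10*(k:ℝ)^2
      + (9/2 - 15*A + 21*A^2 - 63*A^3/4 + 105*A^4/16 - 21*A^5/16)/A^10*(k:ℝ)^3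
      + (15/2 - 21*A + 189*A^2/8 - 105*A^3/8 + 105*A^4/32)/A^10*(k:ℝ)^4
      + (42/5 - 189*A/10 + 63*A^2/4 - 21*A^3/4)/A^10*(k:ℝ)^5
      + (63/10 - 21*A/2 + 21*A^2/4)/A^10*(k:ℝ)^6
      + (3 - 3*A)/A^10*(k:ℝ)^7
      + (3/4)/A^10*(k:ℝ)^8 := by
    intro k hk
    rw [hcast k]
    rw [intervalIntegral.integral_congr_ae
      ((MeasureTheory.ae_restrict_iff' measurableSet_uIoc).mp (hae k hk))]
    simp only [hP]
    rw [pieceFTC A ((A-1)/2 - (k:ℝ)) ((k:ℝ)/A) (((k:ℝ)+1)/A)]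
    field_simp
    ring
  rw [hf] at hsplit
  rw [← hsplit, Finset.sum_congr rfl (fun k hk => hpiece k (Finset.mem_range.mp hk)),
    sum_poly8]
  rw [← hA]
  field_simp
  ring
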